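/- Let F ⊆ E be a finite extension of fields of characteristic 0 and let D be a derivation on E with D(F) ⊆ F. Then for every nonzero y ∈ E, D(Norm_{E/F}(y)) / Norm_{E/F}(y) = Tr_{E/F}(D(y)/y), where Norm_{E/F} and Tr_{E/F} denote the field norm and trace of E over F. -/

import Mathlib

open Matrix Finset

private lemma d_one {R : Type*} [CommRing R] (d : R → R)
    (hmul : ∀ a b, d (a * b) = d a * b + a * d b) : d 1 = 0 := by
  have h := hmul 1 1
  rw [mul_one, one_mul, mul_one] at h
  exact (left_eq_add.mp h)

private lemma d_prod {R : Type*} [CommRing R] (d : R → R)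
    (hadd : ∀ a b, d (a + b) = d a + d b)
    (hmul : ∀ a b, d (a * b) = d a * b + a * d b)
    {ι : Type*} [DecidableEq ι] (s : Finset ι) (f : ι → R) :
    d (∏ i ∈ s, f i) = ∑ i ∈ s, (∏ j ∈ s.erase i, f j) * d (f i) := by
  clear hadd
  induction s using Finset.induction_on with
  | empty => simpa using d_one d hmul
  | @insert a s ha ih =>
    rw [Finset.prod_insert ha, hmul, ih, Finset.sum_insert ha, Finset.erase_insert ha,
      Finset.mul_sum]
    congr 1
    · ring
    · refine Finset.sum_congr rfl fun i hi => ?_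
      rw [Finset.erase_insert_of_ne (by rintro rfl; exact ha hi),
        Finset.prod_insert (fun h => ha (Finset.mem_of_mem_erase h))]
      ring

/-- Jacobi's formula for a derivation on a commutative ring. -/
private lemma jacobi_det {R : Type*} [CommRing R] {n : Type*} [Fintype n] [DecidableEq n]
    (d : R → R) (hadd : ∀ a b, d (a + b) = d a + d b)
    (hmul : ∀ a b, d (a * b) = d a * b + a * d b) (M : Matrix n n R) :
    d M.det = (M.adjugate * M.map d).trace := by
  have h1 : d 1 = 0 := d_one d hmul
  have hneg : ∀ a : R, d (-a) = -d a := fun a => (AddMonoidHom.mk' d hadd).map_neg a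
  have hsign : ∀ σ : Equiv.Perm n, d ((Equiv.Perm.sign σ : ℤ) : R) = 0 := by
    intro σ
    rcases Int.units_eq_one_or (Equiv.Perm.sign σ) with h | h <;> rw [h]
    · simpa using h1
    · push_cast
      rw [hneg, h1, neg_zero]
  have hdsum : ∀ f : Equiv.Perm n → R,
      d (∑ σ : Equiv.Perm n, f σ) = ∑ σ : Equiv.Perm n, d (f σ) := fun f =>
    map_sum (AddMonoidHom.mk' d hadd) f Finset.univ
  have lhs : d M.det = ∑ i : n, (M.updateCol i fun k => d (M k i)).det := by
    rw [det_apply', hdsum]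
    have step : ∀ σ : Equiv.Perm n,
        d (((Equiv.Perm.sign σ : ℤ) : R) * ∏ i, M (σ i) i)
          = ∑ i : n, ((Equiv.Perm.sign σ : ℤ) : R) *
              ((∏ j ∈ Finset.univ.erase i, M (σ j) j) * d (M (σ i) i)) := by
      intro σ
      rw [hmul, hsign, zero_mul, zero_add, d_prod d hadd hmul, Finset.mul_sum]
    rw [Finset.sum_congr rfl fun σ _ => step σ, Finset.sum_comm]
    refine Finset.sum_congr rfl fun i _ => ?_
    rw [det_apply']
    refine Finset.sum_congr rfl fun σ _ => ?_
    rw [← Finset.mul_prod_erase Finset.univ _ (Finset.mem_univ i)]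
    have hprod : (∏ j ∈ Finset.univ.erase i,
          (M.updateCol i fun k => d (M k i)) (σ j) j)
        = ∏ j ∈ Finset.univ.erase i, M (σ j) j :=
      Finset.prod_congr rfl fun j hj => by
        rw [Matrix.updateCol_apply, if_neg (Finset.ne_of_mem_erase hj)]
    rw [hprod, Matrix.updateCol_apply, if_pos rfl]
    ring
  have rhs : (M.adjugate * M.map d).trace
      = ∑ i : n, (M.updateCol i fun k => d (M k i)).det := by
    rw [Matrix.trace]
    refine Finset.sum_congr rfl fun i _ => ?_
    have h2 : (M.adjugate * M.map d).diag i
        = (M.adjugate *ᵥ fun k => d (M k i)) i := by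
      simp [Matrix.mul_apply, Matrix.mulVec, dotProduct, Matrix.map_apply,
        Matrix.diag]
    rw [h2, ← Matrix.cramer_eq_adjugate_mulVec, Matrix.cramer_apply]
  rw [lhs, rhs]
theorem deriv_norm_div_norm_eq_trace_logDeriv
    {F E : Type*} [Field F] [Field E] [Algebra F E]
    [CharZero F] [CharZero E] [FiniteDimensional F E]
    (D : Derivation ℚ E E)
    (hDF : ∀ x : F, ∃ y : F, D (algebraMap F E x) = algebraMap F E y)
    (y : E) (hy : y ≠ 0) :
    D (algebraMap F E (Algebra.norm F y)) / algebraMap F E (Algebra.norm F y)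
      = algebraMap F E (Algebra.trace F E (D y / y)) := by
  classical
  choose d hd using hDF
  have hinj : Function.Injective (algebraMap F E) := (algebraMap F E).injective
  have hdadd : ∀ a b : F, d (a + b) = d a + d b := by
    intro a b
    apply hinj
    rw [← hd, _root_.map_add, _root_.map_add, _root_.map_add, hd, hd]
  have hdmul : ∀ a b : F, d (a * b) = d a * b + a * d b := by
    intro a b
    apply hinj
    rw [← hd, _root_.map_mul, D.leibniz, smul_eq_mul, smul_eq_mul, _root_.map_add, _root_.map_mul, _root_.map_mul, hd, hd]
    ring
  set b : Module.Basis (Fin (Module.finrank F E)) F E := Module.finBasis F E with hb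
  set M := Algebra.leftMulMatrix b y with hM
  set T : Matrix (Fin (Module.finrank F E)) (Fin (Module.finrank F E)) F :=
    Matrix.of fun k i => b.repr (D (b i)) k with hT
  -- basis expansion of D
  have hDz : ∀ z : E, D z = (∑ i, algebraMap F E (d (b.repr z i)) * b i)
      + ∑ i, b.repr z i • D (b i) := by
    intro z
    conv_lhs => rw [← b.sum_repr z]
    rw [_root_.map_sum, ← Finset.sum_add_distrib]
    refine Finset.sum_congr rfl fun i _ => ?_
    rw [Algebra.smul_def, D.leibniz, smul_eq_mul, smul_eq_mul, hd, Algebra.smul_def]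
    ring
  have coord : ∀ (z : E) (k), b.repr (D z) k
      = d (b.repr z k) + ∑ i, T k i * b.repr z i := by
    intro z k
    rw [hDz z, _root_.map_add, Finsupp.add_apply]
    congr 1
    · rw [_root_.map_sum, Finsupp.finset_sum_apply]
      rw [Finset.sum_eq_single k]
      · rw [← Algebra.smul_def, _root_.map_smul, Finsupp.smul_apply, Module.Basis.repr_self,
          Finsupp.single_eq_same, smul_eq_mul, mul_one]
      · intro i _ hik
        rw [← Algebra.smul_def, _root_.map_smul, Finsupp.smul_apply, Module.Basis.repr_self,
          Finsupp.single_eq_of_ne hik.symm, smul_zero]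
      · intro h
        exact absurd (Finset.mem_univ k) h
    · rw [_root_.map_sum, Finsupp.finset_sum_apply]
      refine Finset.sum_congr rfl fun i _ => ?_
      rw [_root_.map_smul, Finsupp.smul_apply, smul_eq_mul, hT]
      exact mul_comm _ _
  -- the key matrix identity
  have key : M.map d = Algebra.leftMulMatrix b (D y) + (M * T - T * M) := by
    ext k j
    have h1 : b.repr (D (y * b j)) k = d (M k j) + (T * M) k j := by
      rw [coord (y * b j) k, Matrix.mul_apply]
      congr 1
      · rw [hM, Algebra.leftMulMatrix_eq_repr_mul]
      · exact Finset.sum_congr rfl fun i _ => by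
          rw [hM, Algebra.leftMulMatrix_eq_repr_mul]
    have h2 : b.repr (D (y * b j)) k
        = (M * T) k j + Algebra.leftMulMatrix b (D y) k j := by
      rw [D.leibniz, smul_eq_mul, smul_eq_mul, _root_.map_add, Finsupp.add_apply]
      congr 1
      · -- y * D (b j)
        conv_lhs => rw [← b.sum_repr (D (b j)), Finset.mul_sum]
        rw [_root_.map_sum, Finsupp.finset_sum_apply, Matrix.mul_apply]
        refine Finset.sum_congr rfl fun i _ => ?_
        rw [mul_smul_comm, _root_.map_smul, Finsupp.smul_apply, smul_eq_mul, hM,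
          Algebra.leftMulMatrix_eq_repr_mul, hT]
        simp only [Matrix.of_apply]
        ring
      · rw [mul_comm, Algebra.leftMulMatrix_eq_repr_mul]
    have := h1.symm.trans h2
    simp only [Matrix.map_apply, Matrix.add_apply, Matrix.sub_apply]
    linear_combination this
  -- inverse matrix
  have hMl : Algebra.leftMulMatrix b y⁻¹ * M = 1 := by
    rw [hM, ← _root_.map_mul, inv_mul_cancel₀ hy, _root_.map_one]
  have hMr : M * Algebra.leftMulMatrix b y⁻¹ = 1 := by
    rw [hM, ← _root_.map_mul, mul_inv_cancel₀ hy, _root_.map_one]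
  have hadj : M.adjugate = M.det • (Algebra.leftMulMatrix b y⁻¹) := by
    calc M.adjugate = 1 * M.adjugate := (one_mul _).symm
      _ = Algebra.leftMulMatrix b y⁻¹ * M * M.adjugate := by rw [hMl]
      _ = Algebra.leftMulMatrix b y⁻¹ * (M * M.adjugate) := by rw [mul_assoc]
      _ = Algebra.leftMulMatrix b y⁻¹ * (M.det • 1) := by rw [Matrix.mul_adjugate]
      _ = M.det • (Algebra.leftMulMatrix b y⁻¹) := by
          rw [Matrix.mul_smul, mul_one]
  -- combine with Jacobi's formula
  have hjac := jacobi_det d hdadd hdmul M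
  have htr : (M.adjugate * M.map d).trace = M.det * Algebra.trace F E (D y / y) := by
    rw [key, hadj, Matrix.smul_mul, Matrix.trace_smul, smul_eq_mul]
    congr 1
    rw [Matrix.mul_add, Matrix.mul_sub, Matrix.trace_add, Matrix.trace_sub]
    have e1 : (Algebra.leftMulMatrix b y⁻¹ * (M * T)).trace = T.trace := by
      rw [← mul_assoc, hMl, one_mul]
    have e2 : (Algebra.leftMulMatrix b y⁻¹ * (T * M)).trace = T.trace := by
      rw [Matrix.trace_mul_comm, mul_assoc, hMr, mul_one]
    rw [e1, e2, sub_self, add_zero, ← _root_.map_mul, Algebra.trace_eq_matrix_trace b]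
    rw [div_eq_mul_inv, mul_comm]
  have hN : Algebra.norm F y = M.det := Algebra.norm_eq_matrix_det b y
  have hdN : d (Algebra.norm F y) = Algebra.norm F y * Algebra.trace F E (D y / y) := by
    rw [hN, hjac, htr]
  have hNne : algebraMap F E (Algebra.norm F y) ≠ 0 := by
    rw [map_ne_zero]
    exact Algebra.norm_ne_zero_iff.mpr hy
  rw [hd, hdN, _root_.map_mul, mul_div_cancel_left₀ _ hNne]
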